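/- The k-linear map Hom_A(P_1, k_ε) → Hom_A(P_2, k_ε), g ↦ g ∘ d_2, has kernel of k-dimension n² and image of k-dimension n². -/

import Mathlib

/-!
Common setting (from the paper "The Anick resolution of the co-unit of the free unitary
quantum group", arXiv:2403.06663):

`k` is a field and `n ≥ 2`.  `S` is the set of `2n²` generators `u∘_{j,i}, u•_{j,i}`,
`(j,i) ∈ {1,…,n}²`, with the involution `*` exchanging `u∘_{j,i}` and `u•_{j,i}`.
Indices are realized `0`-based as elements of `Fin n` (so the index `1` is `fin1 = 0`,
the index `n` is `finN = n-1`, and `σ(i) = n-i+1` is `Fin.rev`).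
-/

namespace UnPlusAnick

/-- A generator: a color (`false` = white `∘`, `true` = black `•`) and a pair of indices. -/
abbrev Gen (n : ℕ) := Bool × Fin n × Fin n

/-- The involution `*` on the generators: it flips the color and keeps the indices. -/
def genStar {n : ℕ} (g : Gen n) : Gen n := (!g.1, g.2)

/-- An `n × n` matrix with entries in the set of generators. -/
abbrev Mat (n : ℕ) := Fin n → Fin n → Gen n

/-- The fundamental matrix `u`, `u_{j,i} = u∘_{j,i}`. -/
def uMat (n : ℕ) : Mat n := fun j i => (false, j, i)

/-- The transpose `vᵀ`. -/
def mT {n : ℕ} (v : Mat n) : Mat n := fun j i => v i j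

/-- The matrix `v^σ`, `(v^σ)_{j,i} = (v_{σ(j),σ(i)})^*`. -/
def mS {n : ℕ} (v : Mat n) : Mat n := fun j i => genStar (v j.rev i.rev)

/-- The matrix `v^δ`, `(v^δ)_{j,i} = (v_{σ(i),σ(j)})^*`; thus `v^δ = (v^σ)ᵀ`. -/
def mD {n : ℕ} (v : Mat n) : Mat n := fun j i => genStar (v i.rev j.rev)

/-- The set `V = {u, uᵀ, u^σ, u^δ}`. -/
def V (n : ℕ) : Set (Mat n) := {uMat n, mT (uMat n), mS (uMat n), mD (uMat n)}

/-- The index `1` of `{1, …, n}`, as the `0`-based element `0` of `Fin n`. -/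
def fin1 (n : ℕ) (hn : 2 ≤ n) : Fin n := ⟨0, by omega⟩

/-- The index `n` of `{1, …, n}`, as the `0`-based element `n - 1` of `Fin n`. -/
def finN (n : ℕ) (hn : 2 ≤ n) : Fin n := ⟨n - 1, by omega⟩

theorem genStar_genStar {n : ℕ} (g : Gen n) : genStar (genStar g) = g := by simp [genStar]

theorem mS_mS {n : ℕ} (v : Mat n) : mS (mS v) = v := by
  funext j i; simp [mS, genStar_genStar]

theorem mD_mD {n : ℕ} (v : Mat n) : mD (mD v) = v := by
  funext j i; simp [mD, genStar_genStar]

theorem mS_mD {n : ℕ} (v : Mat n) : mS (mD v) = mT v := by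
  funext j i; simp [mS, mD, mT, genStar_genStar]

theorem mD_mS {n : ℕ} (v : Mat n) : mD (mS v) = mT v := by
  funext j i; simp [mS, mD, mT, genStar_genStar]

/-- `V` is closed under transposition. -/
theorem V_mT {n : ℕ} {v : Mat n} (hv : v ∈ V n) : mT v ∈ V n := by
  simp only [V, Set.mem_insert_iff, Set.mem_singleton_iff] at hv ⊢
  rcases hv with rfl | rfl | rfl | rfl
  · exact Or.inr (Or.inl rfl)
  · exact Or.inl rfl
  · exact Or.inr (Or.inr (Or.inr rfl))
  · exact Or.inr (Or.inr (Or.inl rfl))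

/-- `V` is closed under `v ↦ v^σ`. -/
theorem V_mS {n : ℕ} {v : Mat n} (hv : v ∈ V n) : mS v ∈ V n := by
  simp only [V, Set.mem_insert_iff, Set.mem_singleton_iff] at hv ⊢
  rcases hv with rfl | rfl | rfl | rfl
  · exact Or.inr (Or.inr (Or.inl rfl))
  · exact Or.inr (Or.inr (Or.inr rfl))
  · exact Or.inl (mS_mS _)
  · exact Or.inr (Or.inl (mS_mD _))

/-- `V` is closed under `v ↦ v^δ`. -/
theorem V_mD {n : ℕ} {v : Mat n} (hv : v ∈ V n) : mD v ∈ V n := by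
  simp only [V, Set.mem_insert_iff, Set.mem_singleton_iff] at hv ⊢
  rcases hv with rfl | rfl | rfl | rfl
  · exact Or.inr (Or.inr (Or.inr rfl))
  · exact Or.inr (Or.inr (Or.inl rfl))
  · exact Or.inr (Or.inl (mD_mS _))
  · exact Or.inl (mD_mD _)

/-! ### Words and the free algebra -/

/-- Words in the generators: the free monoid over the set of generators. -/
abbrev Word (n : ℕ) := FreeMonoid (Gen n)

/-- The free unital associative `k`-algebra on the generators, realized as the monoid algebra
of the free monoid of words; its canonical `k`-basis is the set of words. -/
abbrev FreeAlg (k : Type*) [Field k] (n : ℕ) := MonoidAlgebra k (Word n)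

/-- A word, viewed as a monomial in the free algebra. -/
noncomputable def wd (k : Type*) [Field k] {n : ℕ} (w : Word n) : FreeAlg k n :=
  MonoidAlgebra.of k (Word n) w

/-- The relation `b^v_{j,i} = ∑_{s=1}^{n} v_{j,σ(s)} (v^δ)_{s,σ(i)} − δ_{j,i} · 1`. -/
noncomputable def brel (k : Type*) [Field k] {n : ℕ} (v : Mat n) (j i : Fin n) : FreeAlg k n :=
  (∑ s : Fin n, wd k (FreeMonoid.of (v j s.rev) * FreeMonoid.of (mD v s i.rev)))
    - if j = i then 1 else 0

/-- The set of relations `R = {b^v_{j,i} : v ∈ V, (j,i) ∈ {1,…,n}²}`. -/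
def rels (k : Type*) [Field k] (n : ℕ) : Set (FreeAlg k n) :=
  {x | ∃ v ∈ V n, ∃ j i : Fin n, x = brel k v j i}

/-- `b̃^v = v_{n,n}(v^δ)_{1,1} − ∑_{s=2}^{n} ∑_{t=1}^{n−1} v_{t,σ(s)}(v^δ)_{s,σ(t)} + (n−2)·1`. -/
noncomputable def btil (k : Type*) [Field k] (n : ℕ) (hn : 2 ≤ n) (v : Mat n) : FreeAlg k n :=
  wd k (FreeMonoid.of (v (finN n hn) (finN n hn)) * FreeMonoid.of (mD v (fin1 n hn) (fin1 n hn)))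
    - (∑ s ∈ Finset.univ.filter (fun s : Fin n => s ≠ fin1 n hn),
        ∑ t ∈ Finset.univ.filter (fun t : Fin n => t ≠ finN n hn),
          wd k (FreeMonoid.of (v t s.rev) * FreeMonoid.of (mD v s t.rev)))
    + ((n - 2 : ℕ) : FreeAlg k n)

/-! ### The monomial order and tips -/

/-- The strict order on the generators: every black generator is smaller than every white one;
`u•_{t,s} < u•_{j,i}` iff `(j,i) <` `(t,s)` lexicographically, and `u∘_{t,s} < u∘_{j,i}` iff
`(t,s) < (j,i)` lexicographically. -/
def genLT {n : ℕ} (g h : Gen n) : Prop :=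
  (g.1 = true ∧ h.1 = false) ∨
    (g.1 = true ∧ h.1 = true ∧ toLex h.2 < toLex g.2) ∨
    (g.1 = false ∧ h.1 = false ∧ toLex g.2 < toLex h.2)

/-- The degreewise lexicographic extension of the order on generators to words:
`w ≤ w'` iff `w = w'`, or `w` is shorter than `w'`, or they have the same length and `w`
precedes `w'` lexicographically letter by letter. -/
def wordLE {n : ℕ} (w w' : Word n) : Prop :=
  w = w' ∨ (FreeMonoid.toList w).length < (FreeMonoid.toList w').length ∨
    ((FreeMonoid.toList w).length = (FreeMonoid.toList w').length ∧
      List.Lex genLT (FreeMonoid.toList w) (FreeMonoid.toList w'))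

/-- `IsTip f t`: the word `t` is the `≤`-largest word occurring with nonzero coefficient in
`f`, i.e. `Tip(f) = t`. -/
def IsTip (k : Type*) [Field k] {n : ℕ} (f : FreeAlg k n) (t : Word n) : Prop :=
  f.coeff t ≠ 0 ∧ ∀ w : Word n, f.coeff w ≠ 0 → wordLE w t

/-- `w` divides `w'` (as words in the free monoid). -/
def WDvd {n : ℕ} (w w' : Word n) : Prop := ∃ w₁ w₂ : Word n, w' = w₁ * w * w₂

/-! ### The ideal of relations -/

/-- The two-sided ideal `I` of the free algebra generated by the set of relations `R`. -/
noncomputable def idl (k : Type*) [Field k] (n : ℕ) : TwoSidedIdeal (FreeAlg k n) :=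
  TwoSidedIdeal.span (rels k n)

/-- The set `Tip(I)` of tips of nonzero elements of `I`. -/
def TipSet (k : Type*) [Field k] (n : ℕ) : Set (Word n) :=
  {w | ∃ f : FreeAlg k n, f ∈ idl k n ∧ f ≠ 0 ∧ IsTip k f w}

/-! ### Reductions and ambiguities -/

/-- `φ` is a one-step reduction by `f`: there are fixed words `w₁`, `w₂` such that `φ` maps the
word `w₁ Tip(f) w₂` to `w₁ (Tip(f) − c⁻¹ f) w₂`, where `c` is the leading coefficient of `f`,
and fixes every other word. -/
def IsOneStep (k : Type*) [Field k] {n : ℕ} (f : FreeAlg k n)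
    (φ : FreeAlg k n →ₗ[k] FreeAlg k n) : Prop :=
  f ≠ 0 ∧ ∃ (w₁ w₂ t : Word n), IsTip k f t ∧
    φ (wd k (w₁ * t * w₂)) = wd k w₁ * (wd k t - (f.coeff t)⁻¹ • f) * wd k w₂ ∧
    ∀ w : Word n, w ≠ w₁ * t * w₂ → φ (wd k w) = wd k w

/-- A reduction by a set `G`: a finite composition of one-step reductions by nonzero elements
of `G`. -/
inductive IsReduction (k : Type*) [Field k] {n : ℕ} (G : Set (FreeAlg k n)) :
    (FreeAlg k n →ₗ[k] FreeAlg k n) → Prop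
  | id : IsReduction k G LinearMap.id
  | comp {φ ψ : FreeAlg k n →ₗ[k] FreeAlg k n} {g : FreeAlg k n} (hg : g ∈ G)
      (hφ : IsOneStep k g φ) (hψ : IsReduction k G ψ) : IsReduction k G (φ ∘ₗ ψ)

/-- `(g, g', w₁, w₂)` is an inclusion ambiguity of `G`. -/
def IsInclusionAmbiguity (k : Type*) [Field k] {n : ℕ} (G : Set (FreeAlg k n))
    (g g' : FreeAlg k n) (w₁ w₂ : Word n) : Prop :=
  g ∈ G ∧ g' ∈ G ∧ g ≠ 0 ∧ g' ≠ 0 ∧ g ≠ g' ∧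
    ∃ t t' : Word n, IsTip k g t ∧ IsTip k g' t' ∧ w₁ * t * w₂ = t'

/-- The inclusion ambiguity `(g, g', w₁, w₂)` of `G` resolves. -/
def InclusionAmbiguityResolves (k : Type*) [Field k] {n : ℕ} (G : Set (FreeAlg k n))
    (g g' : FreeAlg k n) (w₁ w₂ : Word n) : Prop :=
  ∀ t t' : Word n, IsTip k g t → IsTip k g' t' →
    ∃ φ₁ φ₂ : FreeAlg k n →ₗ[k] FreeAlg k n, IsReduction k G φ₁ ∧ IsReduction k G φ₂ ∧
      φ₁ (wd k t' - (g'.coeff t')⁻¹ • g') = φ₂ (wd k w₁ * (wd k t - (g.coeff t)⁻¹ • g) * wd k w₂)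

/-- `(g₁, g₂, w₁, w₂)` is an overlap ambiguity of `G`. -/
def IsOverlapAmbiguity (k : Type*) [Field k] {n : ℕ} (G : Set (FreeAlg k n))
    (g₁ g₂ : FreeAlg k n) (w₁ w₂ : Word n) : Prop :=
  g₁ ∈ G ∧ g₂ ∈ G ∧ g₁ ≠ 0 ∧ g₂ ≠ 0 ∧ ¬(w₁ = 1 ∧ w₂ = 1) ∧
    ∃ t₁ t₂ : Word n, IsTip k g₁ t₁ ∧ IsTip k g₂ t₂ ∧ t₁ * w₂ = w₁ * t₂ ∧
      ¬WDvd t₂ w₂ ∧ ¬WDvd t₁ w₁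

/-- The overlap ambiguity `(g₁, g₂, w₁, w₂)` of `G` resolves. -/
def OverlapAmbiguityResolves (k : Type*) [Field k] {n : ℕ} (G : Set (FreeAlg k n))
    (g₁ g₂ : FreeAlg k n) (w₁ w₂ : Word n) : Prop :=
  ∀ t₁ t₂ : Word n, IsTip k g₁ t₁ → IsTip k g₂ t₂ →
    ∃ φ₁ φ₂ : FreeAlg k n →ₗ[k] FreeAlg k n, IsReduction k G φ₁ ∧ IsReduction k G φ₂ ∧
      φ₁ ((wd k t₁ - (g₁.coeff t₁)⁻¹ • g₁) * wd k w₂) = φ₂ (wd k w₁ * (wd k t₂ - (g₂.coeff t₂)⁻¹ • g₂))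

/-! ### Gröbner bases -/

/-- `G` is a Gröbner basis of the two-sided ideal `J` with respect to the order: `G ⊆ J` and
the tip of every nonzero element of `J` is divisible by the tip of some nonzero element
of `G`. -/
def IsGroebner (k : Type*) [Field k] {n : ℕ} (G : Set (FreeAlg k n))
    (J : TwoSidedIdeal (FreeAlg k n)) : Prop :=
  (∀ g ∈ G, g ∈ J) ∧
    ∀ f : FreeAlg k n, f ∈ J → f ≠ 0 → ∀ t : Word n, IsTip k f t →
      ∃ g ∈ G, g ≠ 0 ∧ ∃ tg : Word n, IsTip k g tg ∧ WDvd tg t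

/-- A minimal Gröbner basis: `0 ∉ G` and the tip of no element of `G` divides the tip of a
different element of `G`. -/
def IsMinimalGroebner (k : Type*) [Field k] {n : ℕ} (G : Set (FreeAlg k n))
    (J : TwoSidedIdeal (FreeAlg k n)) : Prop :=
  IsGroebner k G J ∧ (0 : FreeAlg k n) ∉ G ∧
    ∀ g ∈ G, ∀ g' ∈ G, g ≠ g' → ∀ t t' : Word n, IsTip k g t → IsTip k g' t' → ¬WDvd t t'

/-- A reduced Gröbner basis: minimal, every element has leading coefficient `1`, and the tip of
no element of `G` divides a word occurring with nonzero coefficient in a different element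
of `G`. -/
def IsReducedGroebner (k : Type*) [Field k] {n : ℕ} (G : Set (FreeAlg k n))
    (J : TwoSidedIdeal (FreeAlg k n)) : Prop :=
  IsMinimalGroebner k G J ∧ (∀ g ∈ G, ∀ t : Word n, IsTip k g t → g.coeff t = 1) ∧
    ∀ g ∈ G, ∀ g' ∈ G, g ≠ g' → ∀ t : Word n, IsTip k g t →
      ∀ w : Word n, g'.coeff w ≠ 0 → ¬WDvd t w

/-! ### Monoidal ideals -/

/-- A monoidal ideal of the free monoid of words: a set of words containing all multiples of
its elements. -/
def IsMonIdeal {n : ℕ} (M : Set (Word n)) : Prop :=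
  ∀ w ∈ M, ∀ w₁ w₂ : Word n, w₁ * w * w₂ ∈ M

/-- `N` generates `M` as a monoidal ideal: `M` is the smallest monoidal ideal containing `N`. -/
def GeneratesMonIdeal {n : ℕ} (N M : Set (Word n)) : Prop :=
  IsMonIdeal M ∧ N ⊆ M ∧ ∀ M' : Set (Word n), IsMonIdeal M' → N ⊆ M' → M ⊆ M'

/-! ### Chain words -/

/-- `v^{[ℓ]}`: equal to `v` for odd `ℓ` and to `v^δ` for even `ℓ`. -/
def pw {n : ℕ} (l : ℕ) (v : Mat n) : Mat n := if l % 2 = 1 then v else mD v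

/-- The word `v^{(ℓ)}_{j,i}` (for `ℓ ≥ 1`). -/
def chainWord (n : ℕ) (hn : 2 ≤ n) (v : Mat n) (l : ℕ) (j i : Fin n) : Word n :=
  if l = 1 then FreeMonoid.of (v j i.rev)
  else if l % 2 = 0 then
    FreeMonoid.of (v j (finN n hn)) *
      (FreeMonoid.of (mD v (fin1 n hn) (finN n hn)) *
          FreeMonoid.of (v (fin1 n hn) (finN n hn))) ^ ((l - 2) / 2) *
      FreeMonoid.of (mD v (fin1 n hn) i.rev)
  else
    FreeMonoid.of (v j (finN n hn)) *
      (FreeMonoid.of (mD v (fin1 n hn) (finN n hn)) *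
          FreeMonoid.of (v (fin1 n hn) (finN n hn))) ^ ((l - 3) / 2) *
      FreeMonoid.of (mD v (fin1 n hn) (finN n hn)) * FreeMonoid.of (v (fin1 n hn) i.rev)

/-- The set `C_ℓ = {v^{(ℓ)}_{j,i} : v ∈ V, (j,i) ∈ {1,…,n}²}` of `ℓ`-chains. -/
def Cset (n : ℕ) (hn : 2 ≤ n) (l : ℕ) : Set (Word n) :=
  {w | ∃ v ∈ V n, ∃ j i : Fin n, w = chainWord n hn v l j i}

/-! ### The quotient algebra `A = F/I`, the counit and the modules of the resolution -/

/-- The relation identifying each element of `R` with `0`; the induced ring congruence realizes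
the quotient `A = F/I` by the two-sided ideal `I` generated by `R`. -/
def relR (k : Type*) [Field k] (n : ℕ) : FreeAlg k n → FreeAlg k n → Prop :=
  fun a b => a ∈ rels k n ∧ b = 0

/-- The `k`-algebra `A = F/I`. -/
abbrev Aq (k : Type*) [Field k] (n : ℕ) := RingQuot (relR k n)

/-- The quotient map `F → A = F/I`. -/
noncomputable def pr (k : Type*) [Field k] (n : ℕ) : FreeAlg k n →ₐ[k] Aq k n :=
  RingQuot.mkAlgHom k (relR k n)

/-- The class `v_{j,i} + I ∈ A` of a generator. -/
noncomputable def gen (k : Type*) [Field k] {n : ℕ} (v : Mat n) (j i : Fin n) : Aq k n :=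
  pr k n (wd k (FreeMonoid.of (v j i)))

/-- The ring homomorphism `Aᵐᵒᵖ →+* k` induced by `ε` (using the commutativity of `k`). -/
noncomputable def epsOp (k : Type*) [Field k] (n : ℕ) (ε : Aq k n →ₐ[k] k) :
    (Aq k n)ᵐᵒᵖ →+* k where
  toFun a := ε a.unop
  map_one' := by simp
  map_mul' a b := by simp [mul_comm]
  map_zero' := by simp
  map_add' a b := by simp

/-- The right `A`-module `k_ε`: the field `k` with the right `A`-action induced by `ε`,
realized as a left module over the opposite algebra `Aᵐᵒᵖ`. -/
def KE (k : Type*) [Field k] (n : ℕ) (_ε : Aq k n →ₐ[k] k) : Type _ := k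

instance (k : Type*) [Field k] (n : ℕ) (ε : Aq k n →ₐ[k] k) : AddCommGroup (KE k n ε) :=
  inferInstanceAs (AddCommGroup k)

instance (k : Type*) [Field k] (n : ℕ) (ε : Aq k n →ₐ[k] k) : Module k (KE k n ε) :=
  inferInstanceAs (Module k k)

instance (k : Type*) [Field k] (n : ℕ) (ε : Aq k n →ₐ[k] k) : One (KE k n ε) := ⟨(1 : k)⟩

noncomputable instance (k : Type*) [Field k] (n : ℕ) (ε : Aq k n →ₐ[k] k) :
    Module ((Aq k n)ᵐᵒᵖ) (KE k n ε) :=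
  Module.compHom k (epsOp k n ε)

instance (k : Type*) [Field k] (n : ℕ) (ε : Aq k n →ₐ[k] k) :
    SMulCommClass ((Aq k n)ᵐᵒᵖ) k (KE k n ε) :=
  ⟨fun a c x => by
    show epsOp k n ε a • (c • x) = c • (epsOp k n ε a • x)
    rw [smul_smul, smul_smul, mul_comm]⟩

/-- The free right `A`-module `P_ℓ = kC_ℓ ⊗ₖ A` with basis `C_ℓ` (for `ℓ ≥ 1`), realized as a
left module over the opposite algebra `Aᵐᵒᵖ`. -/
abbrev Pmod (k : Type*) [Field k] (n : ℕ) (hn : 2 ≤ n) (l : ℕ) :=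
  ↥(Cset n hn l) →₀ Aq k n

/-- The element `v^{(ℓ)}_{j,i} ⊗ a` of `P_ℓ`. -/
noncomputable def bas (k : Type*) [Field k] (n : ℕ) (hn : 2 ≤ n) (l : ℕ) (v : Mat n)
    (hv : v ∈ V n) (j i : Fin n) (a : Aq k n) : Pmod k n hn l :=
  Finsupp.single ⟨chainWord n hn v l j i, ⟨v, hv, j, i, rfl⟩⟩ a

/-- Pre-composition with a homomorphism of right `A`-modules, as the `k`-linear map
`Hom_A(N, k_ε) → Hom_A(M, k_ε)`, `g ↦ g ∘ d`. -/
noncomputable def homMap (k : Type*) [Field k] {n : ℕ} (ε : Aq k n →ₐ[k] k) {M N : Type*}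
    [AddCommMonoid M] [AddCommMonoid N] [Module ((Aq k n)ᵐᵒᵖ) M] [Module ((Aq k n)ᵐᵒᵖ) N]
    (d : M →ₗ[(Aq k n)ᵐᵒᵖ] N) :
    (N →ₗ[(Aq k n)ᵐᵒᵖ] KE k n ε) →ₗ[k] (M →ₗ[(Aq k n)ᵐᵒᵖ] KE k n ε) where
  toFun g := g.comp d
  map_add' _ _ := LinearMap.ext fun _ => rfl
  map_smul' _ _ := LinearMap.ext fun _ => rfl

/-- The right-hand side of the defining formula for `d₂` on the basis element
`v^{(2)}_{j,i} ⊗ 1`. -/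
noncomputable def d2RHS (k : Type*) [Field k] (n : ℕ) (hn : 2 ≤ n) (v : Mat n)
    (hv : v ∈ V n) (j i : Fin n) : Pmod k n hn 1 :=
  (∑ s : Fin n, bas k n hn 1 v hv j s (gen k (mD v) s i.rev))
    + bas k n hn 1 (mD v) (V_mD hv) j.rev i 1
    - (if j = finN n hn ∧ i = finN n hn then
        ∑ s ∈ Finset.univ.filter (fun s : Fin n => s ≠ fin1 n hn),
          ((∑ t : Fin n, bas k n hn 1 v hv t s (gen k (mD v) s t.rev))
            + bas k n hn 1 (mD v) (V_mD hv) s s.rev 1)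
      else 0)

/-- The right-hand side of the defining formula for `d_ℓ`, `ℓ ≥ 3`, on the basis element
`v^{(ℓ)}_{j,i} ⊗ 1`. -/
noncomputable def dTail (k : Type*) [Field k] (n : ℕ) (hn : 2 ≤ n) (l : ℕ) (v : Mat n)
    (hv : v ∈ V n) (j i : Fin n) : Pmod k n hn (l - 1) :=
  (∑ s : Fin n, bas k n hn (l - 1) v hv j s (gen k (pw l v) s i.rev))
    + bas k n hn (l - 1) (mD v) (V_mD hv) j.rev i ((-1 : Aq k n) ^ l)
    + (if j = finN n hn then
        ((bas k n hn (l - 1) (mT v) (V_mT hv) (fin1 n hn) (fin1 n hn)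
              (gen k (pw l (mT v)) i.rev (finN n hn))
            + (if l = 3 then
                ∑ s ∈ Finset.univ.filter (fun s : Fin n => s ≠ fin1 n hn ∧ s ≠ finN n hn),
                  bas k n hn (l - 1) (mT v) (V_mT hv) s s (gen k (pw l (mT v)) i.rev (finN n hn))
              else 0))
          - (if i = finN n hn then
              (∑ s : Fin n, bas k n hn (l - 1) (mT v) (V_mT hv) (fin1 n hn) s
                  (gen k (pw l (mT v)) s (finN n hn)))
                + bas k n hn (l - 1) (mS v) (V_mS hv) (finN n hn) (fin1 n hn) ((-1 : Aq k n) ^ l)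
            else 0))
      else 0)
    + (if j = fin1 n hn ∧ i = finN n hn then
        bas k n hn (l - 1) (mS v) (V_mS hv) (fin1 n hn) (fin1 n hn) ((-1 : Aq k n) ^ l)
          + (if l = 3 then
              ∑ s ∈ Finset.univ.filter (fun s : Fin n => s ≠ fin1 n hn ∧ s ≠ finN n hn),
                bas k n hn (l - 1) (mS v) (V_mS hv) s s ((-1 : Aq k n) ^ l)
            else 0)
      else 0)

/-- The system of identities from STATEMENT 14, for a fixed `v ∈ V`. -/
noncomputable def cond14 (k : Type*) [Field k] {n : ℕ} (hn : 2 ≤ n) (ε : Aq k n →ₐ[k] k)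
    (g : Pmod k n hn 1 →ₗ[(Aq k n)ᵐᵒᵖ] KE k n ε) (v : Mat n) (hv : v ∈ V n) : Prop :=
  ∀ j i : Fin n, g (bas k n hn 1 (mS v) (V_mS hv) j i 1) = -g (bas k n hn 1 v hv i j 1)

/-- The system of identities (1)–(4) from STATEMENT 16, for a fixed `v ∈ V`. -/
noncomputable def cond16 (k : Type*) [Field k] {n : ℕ} (hn : 2 ≤ n) (ε : Aq k n →ₐ[k] k)
    (l : ℕ) (g : Pmod k n hn (l - 1) →ₗ[(Aq k n)ᵐᵒᵖ] KE k n ε) (v : Mat n)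
    (hv : v ∈ V n) : Prop :=
  (∀ j i : Fin n, (j, i) ≠ (fin1 n hn, fin1 n hn) →
      g (bas k n hn (l - 1) (mT v) (V_mT hv) j i 1) =
        -(((-1 : k) ^ l) • g (bas k n hn (l - 1) (mS v) (V_mS hv) j.rev i.rev 1))
          - (if j = finN n hn ∧ i = finN n hn then
              g (bas k n hn (l - 1) v hv (fin1 n hn) (fin1 n hn) 1)
                + (if l = 3 then
                    ∑ s ∈ Finset.univ.filter (fun s : Fin n => s ≠ fin1 n hn ∧ s ≠ finN n hn),
                      g (bas k n hn (l - 1) v hv s s 1)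
                  else 0)
            else 0)) ∧
  (∀ j i : Fin n, (j, i) ≠ (fin1 n hn, fin1 n hn) →
      g (bas k n hn (l - 1) (mD v) (V_mD hv) j i 1) =
        -(((-1 : k) ^ l) • g (bas k n hn (l - 1) v hv j.rev i.rev 1))
          - (if j = finN n hn ∧ i = finN n hn then
              g (bas k n hn (l - 1) (mS v) (V_mS hv) (fin1 n hn) (fin1 n hn) 1)
                + (if l = 3 then
                    ∑ s ∈ Finset.univ.filter (fun s : Fin n => s ≠ fin1 n hn ∧ s ≠ finN n hn),
                      g (bas k n hn (l - 1) (mS v) (V_mS hv) s s 1)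
                  else 0)
            else 0)) ∧
  (g (bas k n hn (l - 1) (mD v) (V_mD hv) (fin1 n hn) (fin1 n hn) 1) =
      -(((-1 : k) ^ l) • g (bas k n hn (l - 1) (mT v) (V_mT hv) (fin1 n hn) (fin1 n hn) 1))
        - ((-1 : k) ^ l) • g (bas k n hn (l - 1) v hv (finN n hn) (finN n hn) 1)
        + (if l = 3 then
            ∑ s ∈ Finset.univ.filter (fun s : Fin n => s ≠ fin1 n hn ∧ s ≠ finN n hn),
              g (bas k n hn (l - 1) (mS v) (V_mS hv) s s 1)
          else 0)) ∧
  (g (bas k n hn (l - 1) (mS v) (V_mS hv) (finN n hn) (finN n hn) 1) =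
      -(if l = 3 then
          ∑ s ∈ Finset.univ.filter (fun s : Fin n => s ≠ fin1 n hn ∧ s ≠ finN n hn),
            g (bas k n hn (l - 1) (mS v) (V_mS hv) s s 1)
        else 0)
        + ((-1 : k) ^ l) • (g (bas k n hn (l - 1) v hv (finN n hn) (finN n hn) 1)
            + (if l = 3 then
                ∑ s ∈ Finset.univ.filter (fun s : Fin n => s ≠ fin1 n hn ∧ s ≠ finN n hn),
                  g (bas k n hn (l - 1) v hv s s 1)
              else 0)))

section Aux
variable (k : Type*) [Field k] {n : ℕ} (hn : 2 ≤ n) (ε : Aq k n →ₐ[k] k)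

theorem uMat_mem_V : uMat n ∈ V n := Or.inl rfl

theorem chainWord_one (v : Mat n) (j i : Fin n) :
    chainWord n hn v 1 j i = FreeMonoid.of (v j i.rev) := by simp [chainWord]

theorem fin1_ne_finN : fin1 n hn ≠ finN n hn := by
  intro h
  rw [Fin.ext_iff] at h
  simp [fin1, finN] at h
  omega

theorem rev_fin1 : (fin1 n hn).rev = finN n hn := by
  apply Fin.ext; simp [fin1, finN, Fin.val_rev]

theorem rev_finN : (finN n hn).rev = fin1 n hn := by
  apply Fin.ext; simp [fin1, finN, Fin.val_rev]; omega

theorem mem_C1 (c : Gen n) : FreeMonoid.of c ∈ Cset n hn 1 := by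
  obtain ⟨b, j, i⟩ := c
  cases b
  · exact ⟨uMat n, uMat_mem_V, j, i.rev, by rw [chainWord_one, Fin.rev_rev]; rfl⟩
  · refine ⟨mS (uMat n), Or.inr (Or.inr (Or.inl rfl)), j.rev, i, ?_⟩
    rw [chainWord_one]
    show _ = FreeMonoid.of (genStar (uMat n j.rev.rev i.rev.rev))
    rw [Fin.rev_rev, Fin.rev_rev]; rfl

/-- The basis monomial `single ⟨[c], _⟩ 1` of `P₁`. -/
noncomputable def sgl (c : Gen n) : Pmod k n hn 1 :=
  Finsupp.single ⟨FreeMonoid.of c, mem_C1 hn c⟩ 1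

theorem g_single {l : ℕ} (g : Pmod k n hn l →ₗ[(Aq k n)ᵐᵒᵖ] KE k n ε)
    (c : ↥(Cset n hn l)) (a : Aq k n) :
    g (Finsupp.single c a) = ε a • g (Finsupp.single c 1) := by
  have h : (Finsupp.single c a : Pmod k n hn l)
      = MulOpposite.op a • Finsupp.single c 1 := by
    rw [Finsupp.smul_single]
    congr 1
    exact (one_mul a).symm
  rw [h, map_smul]; rfl

theorem hom_ext {l : ℕ} (g : Pmod k n hn l →ₗ[(Aq k n)ᵐᵒᵖ] KE k n ε)
    (h : ∀ c, g (Finsupp.single c 1) = 0) : g = 0 := by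
  apply LinearMap.ext
  intro x
  induction x using Finsupp.induction_linear with
  | zero => simp
  | add f f' hf hf' => simp [map_add, hf, hf']
  | single c a => rw [g_single k hn ε g c a, h c, smul_zero]; rfl

theorem g_bas (g : Pmod k n hn 1 →ₗ[(Aq k n)ᵐᵒᵖ] KE k n ε)
    (v : Mat n) (hv : v ∈ V n) (j i : Fin n) (a : Aq k n) :
    g (bas k n hn 1 v hv j i a) = ε a • g (sgl k hn (v j i.rev)) := by
  have : bas k n hn 1 v hv j i a
      = Finsupp.single ⟨FreeMonoid.of (v j i.rev), mem_C1 hn _⟩ a := by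
    unfold bas
    congr 1
  rw [this, g_single k hn ε]
  rfl

end Aux
section Aux2
variable (k : Type*) [Field k] {n : ℕ} (hn : 2 ≤ n) (ε : Aq k n →ₐ[k] k)

theorem gsub {l : ℕ} (g : Pmod k n hn l →ₗ[(Aq k n)ᵐᵒᵖ] KE k n ε) (x y : Pmod k n hn l) :
    g (x - y) = g x - g y := map_sub g x y

theorem g_d2RHS
    (hε : ∀ v ∈ V n, ∀ j i : Fin n, ε (gen k v j i) = if j = i then 1 else 0)
    (g : Pmod k n hn 1 →ₗ[(Aq k n)ᵐᵒᵖ] KE k n ε)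
    (v : Mat n) (hv : v ∈ V n) (j i : Fin n) :
    g (d2RHS k n hn v hv j i) =
      (g (sgl k hn (v j i)) + g (sgl k hn (genStar (v i j))))
        - (if j = finN n hn ∧ i = finN n hn then
            ∑ s ∈ Finset.univ.filter (fun s : Fin n => s ≠ fin1 n hn),
              (g (sgl k hn (v s.rev s.rev)) + g (sgl k hn (genStar (v s.rev s.rev))))
          else 0) := by
  have key : ∀ (a b : Fin n),
      (∑ s : Fin n, ε (gen k (mD v) s b.rev) • g (sgl k hn (v a s.rev)))
        = g (sgl k hn (v a b)) := by
    intro a b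
    have h1 : ∀ s : Fin n, ε (gen k (mD v) s b.rev) • g (sgl k hn (v a s.rev))
        = if s = b.rev then g (sgl k hn (v a s.rev)) else 0 := by
      intro s
      rw [hε _ (V_mD hv)]
      split <;> simp
    rw [Finset.sum_congr rfl (fun s _ => h1 s),
      Finset.sum_ite_eq' Finset.univ b.rev (fun s => g (sgl k hn (v a s.rev)))]
    simp [Fin.rev_rev]
  have key2 : ∀ (a b : Fin n),
      (∑ t : Fin n, ε (gen k (mD v) a t.rev) • g (sgl k hn (v t b.rev)))
        = g (sgl k hn (v a.rev b.rev)) := by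
    intro a b
    have h1 : ∀ t : Fin n, ε (gen k (mD v) a t.rev) • g (sgl k hn (v t b.rev))
        = if t = a.rev then g (sgl k hn (v t b.rev)) else 0 := by
      intro t
      rw [hε _ (V_mD hv)]
      rcases eq_or_ne t a.rev with h | h
      · subst h; simp [Fin.rev_rev]
      · rw [if_neg (fun hh => h (by rw [hh, Fin.rev_rev])), if_neg h, zero_smul]
    rw [Finset.sum_congr rfl (fun t _ => h1 t),
      Finset.sum_ite_eq' Finset.univ a.rev (fun t => g (sgl k hn (v t b.rev)))]
    simp
  have hmD : ∀ (a b : Fin n), g (sgl k hn (mD v a b)) = g (sgl k hn (genStar (v b.rev a.rev))) :=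
    fun a b => rfl
  unfold d2RHS
  rw [gsub k hn ε, g.map_add, map_sum g]
  simp only [g_bas k hn ε, apply_ite g, map_zero, map_sum, map_add, map_one, one_smul]
  rw [key j i]
  congr 1
  · congr 1
    rw [hmD, Fin.rev_rev, Fin.rev_rev]
  · split
    · apply Finset.sum_congr rfl
      intro s _
      rw [key2 s s, hmD]; simp only [Fin.rev_rev]
    · rfl

end Aux2
section Aux3
variable (k : Type*) [Field k] {n : ℕ} (hn : 2 ≤ n) (ε : Aq k n →ₐ[k] k)

/-- The `Aᵐᵒᵖ`-linear functional `a ↦ ε a • c` on `A`. -/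
noncomputable def Lc (c : KE k n ε) : Aq k n →ₗ[(Aq k n)ᵐᵒᵖ] KE k n ε where
  toFun a := ε a • c
  map_add' a b := by
    show ε (a + b) • c = ε a • c + ε b • c
    rw [map_add, add_smul]
  map_smul' r a := by
    show ε (a * r.unop) • c = ε r.unop • (ε a • c)
    rw [map_mul, smul_smul, mul_comm]

/-- The value on a one-letter word, given prescribed values on letters. -/
noncomputable def wval (y : Gen n → KE k n ε) (w : Word n) : KE k n ε :=
  ((FreeMonoid.toList w).head?.map y).getD 0

theorem wval_of (y : Gen n → KE k n ε) (c : Gen n) : wval k ε y (FreeMonoid.of c) = y c := rfl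

/-- The `Aᵐᵒᵖ`-linear map `P₁ → k_ε` with prescribed values on basis letters. -/
noncomputable def gY (y : Gen n → KE k n ε) : Pmod k n hn 1 →ₗ[(Aq k n)ᵐᵒᵖ] KE k n ε :=
  Finsupp.lsum ℕ (fun c : ↥(Cset n hn 1) => Lc k ε (wval k ε y c.1))

theorem gY_sgl (y : Gen n → KE k n ε) (c : Gen n) :
    gY k hn ε y (sgl k hn c) = y c := by
  unfold gY sgl
  rw [Finsupp.lsum_single]
  show ε 1 • wval k ε y (FreeMonoid.of c) = y c
  rw [map_one, one_smul, wval_of]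

theorem C1_cases (c : ↥(Cset n hn 1)) :
    ∃ g0 : Gen n, c = ⟨FreeMonoid.of g0, mem_C1 hn g0⟩ := by
  obtain ⟨v, hv, j, i, hw⟩ := c.2
  exact ⟨v j i.rev, Subtype.ext (by rw [hw, chainWord_one])⟩

theorem hom_ext2 (g g' : Pmod k n hn 1 →ₗ[(Aq k n)ᵐᵒᵖ] KE k n ε)
    (h : ∀ c : Gen n, g (sgl k hn c) = g' (sgl k hn c)) : g = g' := by
  rw [← sub_eq_zero]
  apply hom_ext k hn ε
  intro c
  obtain ⟨g0, rfl⟩ := C1_cases hn c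
  show g (sgl k hn g0) - g' (sgl k hn g0) = 0
  rw [h g0, sub_self]

/-- The linear equivalence `Hom_A(P₁, k_ε) ≃ (Gen n → k)`. -/
noncomputable def Psi : (Pmod k n hn 1 →ₗ[(Aq k n)ᵐᵒᵖ] KE k n ε) ≃ₗ[k] (Gen n → KE k n ε) where
  toFun g := fun c => g (sgl k hn c)
  map_add' g g' := rfl
  map_smul' a g := rfl
  invFun := gY k hn ε
  left_inv g := by
    apply hom_ext2 k hn ε
    intro c
    rw [gY_sgl]
  right_inv y := by
    funext c
    exact gY_sgl k hn ε y c

end Aux3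
section Aux4
variable (k : Type*) [Field k] {n : ℕ} (hn : 2 ≤ n) (ε : Aq k n →ₐ[k] k)

theorem mem_ker_iff
    (hε : ∀ v ∈ V n, ∀ j i : Fin n, ε (gen k v j i) = if j = i then 1 else 0)
    (d2 : Pmod k n hn 2 →ₗ[(Aq k n)ᵐᵒᵖ] Pmod k n hn 1)
    (hd2 : ∀ (v : Mat n) (hv : v ∈ V n) (j i : Fin n),
      d2 (bas k n hn 2 v hv j i 1) = d2RHS k n hn v hv j i)
    (g : Pmod k n hn 1 →ₗ[(Aq k n)ᵐᵒᵖ] KE k n ε) :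
    homMap k ε d2 g = 0 ↔
      ∀ j i : Fin n, g (sgl k hn (false, j, i)) + g (sgl k hn (true, i, j)) = 0 := by
  constructor
  · intro h j i
    have hval : ∀ (v : Mat n) (hv : v ∈ V n) (a b : Fin n),
        (g (sgl k hn (v a b)) + g (sgl k hn (genStar (v b a))))
          - (if a = finN n hn ∧ b = finN n hn then
              ∑ s ∈ Finset.univ.filter (fun s : Fin n => s ≠ fin1 n hn),
                (g (sgl k hn (v s.rev s.rev)) + g (sgl k hn (genStar (v s.rev s.rev))))
            else 0) = 0 := by
      intro v hv a b
      rw [← g_d2RHS k hn ε hε g v hv a b, ← hd2 v hv a b]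
      exact LinearMap.ext_iff.mp h (bas k n hn 2 v hv a b 1)
    by_cases hNN : j = finN n hn ∧ i = finN n hn
    · obtain ⟨rfl, rfl⟩ := hNN
      have h2 := hval (mS (uMat n)) (Or.inr (Or.inr (Or.inl rfl))) (fin1 n hn) (fin1 n hn)
      rw [if_neg (fun hc => fin1_ne_finN hn hc.1)] at h2
      have e1 : mS (uMat n) (fin1 n hn) (fin1 n hn) = (true, finN n hn, finN n hn) := by
        show (true, (fin1 n hn).rev, (fin1 n hn).rev) = _
        rw [rev_fin1]
      rw [e1] at h2
      rw [show genStar ((true, finN n hn, finN n hn) : Gen n)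
          = ((false, finN n hn, finN n hn) : Gen n) from rfl, sub_zero] at h2
      rw [add_comm]
      exact h2
    · have h2 := hval (uMat n) uMat_mem_V j i
      rw [if_neg hNN, sub_zero] at h2
      exact h2
  · intro hW
    show g.comp d2 = 0
    apply hom_ext k hn ε
    intro c
    obtain ⟨v, hv, a, b, hw⟩ := c.2
    have hc : c = (⟨chainWord n hn v 2 a b, ⟨v, hv, a, b, rfl⟩⟩ : ↥(Cset n hn 2)) :=
      Subtype.ext hw
    rw [hc]
    show g (d2 (bas k n hn 2 v hv a b 1)) = 0
    rw [hd2, g_d2RHS k hn ε hε g v hv a b]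
    have hZ : ∀ (w : Mat n), w ∈ V n → ∀ (x y : Fin n),
        g (sgl k hn (w x y)) + g (sgl k hn (genStar (w y x))) = 0 := by
      intro w hw'
      simp only [V, Set.mem_insert_iff, Set.mem_singleton_iff] at hw'
      rcases hw' with rfl | rfl | rfl | rfl
      · intro x y; exact hW x y
      · intro x y; exact hW y x
      · intro x y
        show g (sgl k hn (true, x.rev, y.rev)) + g (sgl k hn (false, y.rev, x.rev)) = 0
        rw [add_comm]; exact hW y.rev x.rev
      · intro x y
        show g (sgl k hn (true, y.rev, x.rev)) + g (sgl k hn (false, x.rev, y.rev)) = 0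
        rw [add_comm]; exact hW x.rev y.rev
    rw [hZ v hv a b]
    split
    · rw [Finset.sum_congr rfl (fun s _ => hZ v hv s.rev s.rev), Finset.sum_const_zero,
        sub_zero]
    · rw [sub_zero]

end Aux4
theorem statement_15 (k : Type*) [Field k] (n : ℕ) (hn : 2 ≤ n)
    (ε : Aq k n →ₐ[k] k)
    (hε : ∀ v ∈ V n, ∀ j i : Fin n, ε (gen k v j i) = if j = i then 1 else 0)
    (d2 : Pmod k n hn 2 →ₗ[(Aq k n)ᵐᵒᵖ] Pmod k n hn 1)
    (hd2 : ∀ (v : Mat n) (hv : v ∈ V n) (j i : Fin n),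
      d2 (bas k n hn 2 v hv j i 1) = d2RHS k n hn v hv j i) :
    Module.rank k (LinearMap.ker (homMap k ε d2)) = ((n ^ 2 : ℕ) : Cardinal) ∧
      Module.rank k (LinearMap.range (homMap k ε d2)) = ((n ^ 2 : ℕ) : Cardinal) := by
  classical
  set K := LinearMap.ker (homMap k ε d2) with hK
  let Φ : (Pmod k n hn 1 →ₗ[(Aq k n)ᵐᵒᵖ] KE k n ε) →ₗ[k] (Fin n → Fin n → KE k n ε) :=
    { toFun := fun g j i => g (sgl k hn (false, j, i))
      map_add' := fun g g' => rfl
      map_smul' := fun a g => rfl }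
  let e : ↥K →ₗ[k] (Fin n → Fin n → KE k n ε) := Φ.comp K.subtype
  have h0 : ∀ x : ↥K, e x = 0 → x = 0 := by
    rintro ⟨g, hg⟩ h0e
    have hW := (mem_ker_iff k hn ε hε d2 hd2 g).mp (LinearMap.mem_ker.mp hg)
    have hwhite : ∀ j i : Fin n, g (sgl k hn (false, j, i)) = 0 := by
      intro j i
      exact congrFun (congrFun h0e j) i
    have hblack : ∀ j i : Fin n, g (sgl k hn (true, j, i)) = 0 := by
      intro j i
      have := hW i j
      rw [hwhite i j, zero_add] at this
      exact this
    apply Subtype.ext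
    show g = 0
    apply hom_ext2 k hn ε
    rintro ⟨b, p, q⟩
    cases b
    · rw [hwhite p q]; rfl
    · rw [hblack p q]; rfl
  have hinj : Function.Injective e := by
    intro x y hxy
    have := h0 (x - y) (by rw [map_sub, hxy, sub_self])
    rwa [sub_eq_zero] at this
  have hsurj : Function.Surjective e := by
    intro f
    set y : Gen n → KE k n ε :=
      fun c => if c.1 then -(f c.2.2 c.2.1) else f c.2.1 c.2.2 with hy
    have hmem : gY k hn ε y ∈ K := by
      apply LinearMap.mem_ker.mpr
      apply (mem_ker_iff k hn ε hε d2 hd2 _).mpr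
      intro j i
      rw [gY_sgl, gY_sgl]
      show (if false then -(f i j) else f j i) + (if true then -(f j i) else f i j) = 0
      simp
    refine ⟨⟨gY k hn ε y, hmem⟩, ?_⟩
    funext j i
    show gY k hn ε y (sgl k hn (false, j, i)) = f j i
    rw [gY_sgl]
    rfl
  let eq1 : ↥K ≃ₗ[k] (Fin n → Fin n → KE k n ε) := LinearEquiv.ofBijective e ⟨hinj, hsurj⟩
  haveI hfdKE : FiniteDimensional k (KE k n ε) := inferInstanceAs (FiniteDimensional k k)
  haveI hfdHom : FiniteDimensional k (Pmod k n hn 1 →ₗ[(Aq k n)ᵐᵒᵖ] KE k n ε) :=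
    (Psi k hn ε).symm.finiteDimensional
  have hrKE : Module.finrank k (KE k n ε) = 1 := Module.finrank_self k
  have hrHom : Module.finrank k (Pmod k n hn 1 →ₗ[(Aq k n)ᵐᵒᵖ] KE k n ε) = 2 * n ^ 2 := by
    rw [LinearEquiv.finrank_eq (Psi k hn ε), Module.finrank_pi_fintype, Finset.sum_const,
      hrKE, smul_eq_mul, mul_one]
    show Fintype.card (Gen n) = 2 * n ^ 2
    simp [Fintype.card_prod]
    ring
  have hrker : Module.finrank k ↥K = n ^ 2 := by
    rw [LinearEquiv.finrank_eq eq1, Module.finrank_pi_fintype, Finset.sum_const]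
    have : Module.finrank k (Fin n → KE k n ε) = n := by
      rw [Module.finrank_pi_fintype, Finset.sum_const, hrKE, smul_eq_mul, mul_one,
        Finset.card_univ, Fintype.card_fin]
    rw [this, smul_eq_mul, Finset.card_univ, Fintype.card_fin]
    ring
  have hrn := LinearMap.finrank_range_add_finrank_ker (homMap k ε d2)
  rw [hrHom, ← hK, hrker] at hrn
  have hrrange : Module.finrank k ↥(LinearMap.range (homMap k ε d2)) = n ^ 2 := by omega
  constructor
  · rw [← Module.finrank_eq_rank, hrker]
  · rw [← Module.finrank_eq_rank, hrrange]

end UnPlusAnick
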